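/- For any infinite family 𝒯 of complete L-theories, e-Sp(𝒯) is finite if and only if RS(𝒯) = 1; moreover, if RS(𝒯) = 1 then e-Sp(𝒯) = ds(𝒯). -/
import Mathlib


open FirstOrder Language Cardinal Set

universe u v w

variable {L : FirstOrder.Language.{u, v}}

/-- A complete theory: a satisfiable set of sentences containing each sentence or its
negation (`Theory.IsMaximal` in Mathlib). -/
abbrev CTheory (L : FirstOrder.Language.{u, v}) : Type max u v :=
  {T : L.Theory // T.IsMaximal}

/-- The neighbourhood `𝒯_φ = {T ∈ 𝒯 | φ ∈ T}`. -/
def nbhd (𝒯 : Set (CTheory L)) (φ : L.Sentence) : Set (CTheory L) :=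
  {T | T ∈ 𝒯 ∧ φ ∈ T.1}

/-- `T` is an accumulation point of `𝒯` if for every sentence `φ ∈ T` the set `𝒯_φ` is
infinite. -/
def IsAccPoint (𝒯 : Set (CTheory L)) (T : CTheory L) : Prop :=
  ∀ φ : L.Sentence, φ ∈ T.1 → (nbhd 𝒯 φ).Infinite

/-- The `E`-closure of `𝒯`: `𝒯` together with all its accumulation points. -/
def ClE (𝒯 : Set (CTheory L)) : Set (CTheory L) :=
  𝒯 ∪ {T | IsAccPoint 𝒯 T}

/-- The `e`-spectrum of `𝒯`: the cardinality of the set of accumulation points of `𝒯`. -/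
noncomputable def eSp (𝒯 : Set (CTheory L)) : Cardinal :=
  Cardinal.mk {T : CTheory L // IsAccPoint 𝒯 T}

/-- Two sentences are inconsistent if `{φ, ψ}` is unsatisfiable. -/
def Inconsistent (φ ψ : L.Sentence) : Prop :=
  ¬ FirstOrder.Language.Theory.IsSatisfiable ({φ, ψ} : L.Theory)

open Classical in
/-- `RSge α 𝒯` says `RS(𝒯) ≥ α`: `RS(𝒯) ≥ 0` iff `𝒯 ≠ ∅`; `RS(𝒯) ≥ 1` iff `𝒯` is infinite;
for `β ≥ 1`, `RS(𝒯) ≥ β + 1` iff there are pairwise inconsistent sentences `φ_n`, `n ∈ ℕ`,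
with `RS(𝒯_{φ_n}) ≥ β` for all `n`; for limit `λ`, `RS(𝒯) ≥ λ` iff `RS(𝒯) ≥ β` for all
`β < λ`. -/
noncomputable def RSge (α : Ordinal.{w}) : Set (CTheory L) → Prop :=
  @Ordinal.limitRecOn (fun _ => Set (CTheory L) → Prop) α
    (fun 𝒯 => 𝒯.Nonempty)
    (fun β ih 𝒯 =>
      if β = 0 then 𝒯.Infinite
      else ∃ φ : ℕ → L.Sentence,
        (∀ m n : ℕ, m ≠ n → Inconsistent (φ m) (φ n)) ∧ ∀ k : ℕ, ih (nbhd 𝒯 (φ k)))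
    (fun β _ ih 𝒯 => ∀ γ : Ordinal, ∀ h : γ < β, ih γ h 𝒯)

/-- `RS(𝒯) = α` for an ordinal `α`: `RS(𝒯) ≥ α` but not `RS(𝒯) ≥ α + 1`. -/
def RSeq (𝒯 : Set (CTheory L)) (α : Ordinal.{w}) : Prop :=
  RSge α 𝒯 ∧ ¬ RSge (α + 1) 𝒯

/-- `RS(𝒯) = ∞`: `RS(𝒯) ≥ α` for every ordinal `α`. -/
def RSinf (𝒯 : Set (CTheory L)) : Prop :=
  ∀ α : Ordinal.{w}, RSge α 𝒯

/-- `ds(𝒯) = n` (relative to `RS(𝒯) = α`): `n` is the largest natural number for which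
there exist `n` pairwise inconsistent sentences `φ_1, …, φ_n` with `RS(𝒯_{φ_i}) = α`. -/
def dsEq (𝒯 : Set (CTheory L)) (α : Ordinal.{w}) (n : ℕ) : Prop :=
  IsGreatest {m : ℕ | ∃ φ : Fin m → L.Sentence,
    (∀ i j : Fin m, i ≠ j → Inconsistent (φ i) (φ j)) ∧
    ∀ i : Fin m, RSeq (nbhd 𝒯 (φ i)) α} n

/-- `𝒯` is `e`-minimal: for every sentence `φ`, `𝒯_φ` is finite or `𝒯_{¬φ}` is finite. -/
def EMinimal (𝒯 : Set (CTheory L)) : Prop :=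
  ∀ φ : L.Sentence, (nbhd 𝒯 φ).Finite ∨ (nbhd 𝒯 φ.not).Finite

/-- `𝒯` is `a`-minimal: `𝒯` has infinitely many accumulation points and for every sentence
`φ`, `𝒯_φ` or `𝒯_{¬φ}` has only finitely many accumulation points. -/
def AMinimal (𝒯 : Set (CTheory L)) : Prop :=
  {T : CTheory L | IsAccPoint 𝒯 T}.Infinite ∧
  ∀ φ : L.Sentence,
    {T : CTheory L | IsAccPoint (nbhd 𝒯 φ) T}.Finite ∨
    {T : CTheory L | IsAccPoint (nbhd 𝒯 φ.not) T}.Finite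

/-- `𝒯` is `α`-minimal: `RS(𝒯) = α` and for every sentence `φ`, `RS(𝒯_φ) < α` or
`RS(𝒯_{¬φ}) < α`. -/
def AlphaMinimal (𝒯 : Set (CTheory L)) (α : Ordinal.{w}) : Prop :=
  RSeq 𝒯 α ∧
  ∀ φ : L.Sentence, ¬ RSge α (nbhd 𝒯 φ) ∨ ¬ RSge α (nbhd 𝒯 φ.not)


section Aux

variable {𝒯 𝒮 : Set (CTheory L)} {φ ψ : L.Sentence}

lemma CTheory.exists_model (T : CTheory L) :
    ∃ (M : Type (max u v)) (_ : L.Structure M), M ⊨ T.1 := by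
  let N := T.2.1.some
  exact ⟨N.Carrier, N.struc, N.is_model⟩

lemma CTheory.mem_iff (T : CTheory L) {M : Type (max u v)} [L.Structure M]
    (hM : M ⊨ T.1) (φ : L.Sentence) : φ ∈ T.1 ↔ M ⊨ φ := by
  haveI := hM
  refine ⟨fun h => T.1.realize_sentence_of_mem h, fun h => ?_⟩
  rcases T.2.2 φ with h' | h'
  · exact h'
  · exact absurd h ((Sentence.realize_not M).1 (T.1.realize_sentence_of_mem h'))

lemma CTheory.notMem_iff (T : CTheory L) (φ : L.Sentence) : φ.not ∈ T.1 ↔ φ ∉ T.1 := by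
  obtain ⟨M, iM, hM⟩ := T.exists_model
  rw [T.mem_iff hM, T.mem_iff hM, Sentence.realize_not]

lemma sentence_realize_inf {M : Type*} [L.Structure M] (φ ψ : L.Sentence) :
    M ⊨ φ ⊓ ψ ↔ M ⊨ φ ∧ M ⊨ ψ := by
  simp [Sentence.Realize, Formula.Realize]

lemma sentence_realize_top {M : Type*} [L.Structure M] : M ⊨ (⊤ : L.Sentence) := by
  simp [Sentence.Realize, Formula.Realize]

lemma CTheory.inf_mem (T : CTheory L) {φ ψ : L.Sentence} :
    φ ⊓ ψ ∈ T.1 ↔ φ ∈ T.1 ∧ ψ ∈ T.1 := by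
  obtain ⟨M, iM, hM⟩ := T.exists_model
  rw [T.mem_iff hM, T.mem_iff hM, T.mem_iff hM, sentence_realize_inf]

lemma CTheory.top_mem (T : CTheory L) : (⊤ : L.Sentence) ∈ T.1 := by
  obtain ⟨M, iM, hM⟩ := T.exists_model
  rw [T.mem_iff hM]
  exact sentence_realize_top

lemma mem_not_false {T : CTheory L} (h1 : φ ∈ T.1) (h2 : φ.not ∈ T.1) : False :=
  (T.notMem_iff φ).1 h2 h1

lemma inconsistent_intro
    (h : ∀ (M : Type (max u v)) [L.Structure M], M ⊨ φ → M ⊨ ψ → False) :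
    Inconsistent φ ψ := by
  intro hsat
  obtain ⟨M⟩ := hsat
  exact h M.Carrier (Theory.realize_sentence_of_mem ({φ, ψ} : L.Theory) (Set.mem_insert _ _))
    (Theory.realize_sentence_of_mem ({φ, ψ} : L.Theory) (by simp))

lemma inconsistent_symm (h : Inconsistent φ ψ) : Inconsistent ψ φ := by
  unfold Inconsistent at *
  rwa [Set.pair_comm]

lemma not_inconsistent_of_mem {T : CTheory L} (h1 : φ ∈ T.1) (h2 : ψ ∈ T.1) :
    ¬ Inconsistent φ ψ := fun hc =>
  hc (T.2.1.mono (by rw [Set.insert_subset_iff, Set.singleton_subset_iff]; exact ⟨h1, h2⟩))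

lemma sep (T S : CTheory L) (h : T ≠ S) : ∃ σ, σ ∈ T.1 ∧ σ.not ∈ S.1 := by
  have hne : T.1 ≠ S.1 := fun e => h (Subtype.ext e)
  by_cases hsub : T.1 ⊆ S.1
  · have h2 : ¬ S.1 ⊆ T.1 := fun h2 => hne (hsub.antisymm h2)
    obtain ⟨σ, hσS, hσT⟩ := Set.not_subset.1 h2
    refine ⟨σ.not, (T.notMem_iff σ).2 hσT, ?_⟩
    exact (S.notMem_iff σ.not).2 fun hc => (S.notMem_iff σ).1 hc hσS
  · obtain ⟨σ, hσT, hσS⟩ := Set.not_subset.1 hsub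
    exact ⟨σ, hσT, (S.notMem_iff σ).2 hσS⟩

lemma nbhd_mono (h : 𝒮 ⊆ 𝒯) (φ : L.Sentence) : nbhd 𝒮 φ ⊆ nbhd 𝒯 φ :=
  fun S hS => ⟨h hS.1, hS.2⟩

lemma nbhd_subset : nbhd 𝒯 φ ⊆ 𝒯 := fun S hS => hS.1

lemma IsAccPoint.mono {T : CTheory L} (h : 𝒮 ⊆ 𝒯) (ha : IsAccPoint 𝒮 T) :
    IsAccPoint 𝒯 T := fun φ hφ => (ha φ hφ).mono (nbhd_mono h φ)

/-- Compactness: every infinite family of complete theories has an accumulation point. -/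
lemma exists_accPoint (h : 𝒮.Infinite) : ∃ T : CTheory L, IsAccPoint 𝒮 T := by
  haveI := h.to_subtype
  let 𝒰 : Ultrafilter ↥𝒮 := Ultrafilter.of Filter.cofinite
  have hle : (↑𝒰 : Filter ↥𝒮) ≤ Filter.cofinite := Ultrafilter.of_le _
  have hinf : ∀ {s : Set ↥𝒮}, s ∈ 𝒰 → s.Infinite := by
    intro s hs
    by_contra hfin
    rw [Set.not_infinite] at hfin
    exact Ultrafilter.compl_mem_iff_notMem.1 (hle hfin.compl_mem_cofinite) hs
  set Tmax : L.Theory := {φ | {S : ↥𝒮 | φ ∈ S.1.1} ∈ 𝒰} with hT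
  have hsat : Tmax.IsSatisfiable := by
    rw [Theory.isSatisfiable_iff_isFinitelySatisfiable]
    intro T0 hT0
    have hmem : {S : ↥𝒮 | ∀ φ ∈ T0, φ ∈ S.1.1} ∈ 𝒰 := by
      have he : {S : ↥𝒮 | ∀ φ ∈ T0, φ ∈ S.1.1} = ⋂ φ ∈ T0, {S : ↥𝒮 | φ ∈ S.1.1} := by
        ext; simp
      rw [he]
      exact (Filter.biInter_finset_mem T0).2 fun φ hφ => hT0 (Finset.mem_coe.2 hφ)
    obtain ⟨S, hS⟩ := 𝒰.nonempty_of_mem hmem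
    exact S.1.2.1.mono fun φ hφ => hS φ (Finset.mem_coe.1 hφ)
  have hmax : ∀ φ : L.Sentence, φ ∈ Tmax ∨ φ.not ∈ Tmax := by
    intro φ
    have hu : {S : ↥𝒮 | φ ∈ S.1.1} ∪ {S : ↥𝒮 | φ.not ∈ S.1.1} ∈ 𝒰 := by
      have he : {S : ↥𝒮 | φ ∈ S.1.1} ∪ {S : ↥𝒮 | φ.not ∈ S.1.1} = Set.univ :=
        Set.eq_univ_of_forall fun S => S.1.2.2 φ
      rw [he]
      exact Filter.univ_mem
    exact Ultrafilter.union_mem_iff.1 hu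
  refine ⟨⟨Tmax, hsat, hmax⟩, fun φ hφ => ?_⟩
  have h1 : ({S : ↥𝒮 | φ ∈ S.1.1} : Set ↥𝒮).Infinite := hinf hφ
  have h2 : Subtype.val '' {S : ↥𝒮 | φ ∈ S.1.1} ⊆ nbhd 𝒮 φ := by
    rintro _ ⟨S, hS, rfl⟩
    exact ⟨S.2, hS⟩
  exact ((h1.image (Set.injOn_of_injective Subtype.val_injective)).mono h2)

lemma exists_accPoint_nbhd (h : (nbhd 𝒯 φ).Infinite) :
    ∃ T : CTheory L, IsAccPoint 𝒯 T ∧ φ ∈ T.1 := by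
  obtain ⟨T, hT⟩ := exists_accPoint h
  have hφT : φ ∈ T.1 := by
    by_contra hc
    have he : nbhd (nbhd 𝒯 φ) φ.not = ∅ := by
      ext S
      simp only [nbhd, Set.mem_setOf_eq, Set.mem_empty_iff_false, iff_false]
      rintro ⟨⟨_, h1⟩, h2⟩
      exact mem_not_false h1 h2
    have := hT φ.not ((T.notMem_iff φ).2 hc)
    rw [he] at this
    exact this Set.finite_empty
  exact ⟨T, hT.mono nbhd_subset, hφT⟩

open Classical in
lemma RSge_succ (β : Ordinal.{w}) (𝒯 : Set (CTheory L)) :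
    RSge.{u, v, w} (β + 1) 𝒯 ↔
      (if β = 0 then 𝒯.Infinite
       else ∃ φ : ℕ → L.Sentence, (∀ m n : ℕ, m ≠ n → Inconsistent (φ m) (φ n)) ∧
         ∀ k : ℕ, RSge.{u, v, w} β (nbhd 𝒯 (φ k))) := by
  unfold RSge
  rw [Ordinal.add_one_eq_succ, Ordinal.limitRecOn_succ]

lemma RSge_one_iff (𝒯 : Set (CTheory L)) : RSge.{u, v, w} 1 𝒯 ↔ 𝒯.Infinite := by
  have h := RSge_succ (L := L) (0 : Ordinal.{w}) 𝒯
  rw [zero_add, if_pos rfl] at h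
  exact h

lemma RSge_two_iff (𝒯 : Set (CTheory L)) :
    RSge.{u, v, w} (1 + 1) 𝒯 ↔
      ∃ φ : ℕ → L.Sentence, (∀ m n : ℕ, m ≠ n → Inconsistent (φ m) (φ n)) ∧
        ∀ k : ℕ, (nbhd 𝒯 (φ k)).Infinite := by
  rw [RSge_succ, if_neg one_ne_zero]
  simp only [RSge_one_iff]

/-- Big conjunction of a list of sentences. -/
def bigAnd : List L.Sentence → L.Sentence
  | [] => ⊤
  | φ :: l => φ ⊓ bigAnd l

lemma realize_bigAnd {M : Type*} [L.Structure M] (l : List L.Sentence) :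
    M ⊨ bigAnd l ↔ ∀ φ ∈ l, M ⊨ φ := by
  induction l with
  | nil => simpa [bigAnd] using sentence_realize_top
  | cons φ l ih => simp [bigAnd, sentence_realize_inf, ih]

lemma exists_sep_family {m : ℕ} (T : Fin m → CTheory L) (hT : Function.Injective T) :
    ∃ φ : Fin m → L.Sentence,
      (∀ i j : Fin m, i ≠ j → Inconsistent (φ i) (φ j)) ∧ ∀ i, φ i ∈ (T i).1 := by
  have hsep : ∀ i j : Fin m, ∃ σ : L.Sentence,
      i ≠ j → (σ ∈ (T i).1 ∧ σ.not ∈ (T j).1) := by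
    intro i j
    by_cases h : i = j
    · exact ⟨⊤, fun hc => absurd h hc⟩
    · obtain ⟨σ, h1, h2⟩ := sep (T i) (T j) fun e => h (hT e)
      exact ⟨σ, fun _ => ⟨h1, h2⟩⟩
  choose s hs using hsep
  set lst : Fin m → List L.Sentence := fun i =>
    (((List.finRange m).filter (fun j => j ≠ i)).map (s i)) ++
    (((List.finRange m).filter (fun j => j ≠ i)).map (fun j => (s j i).not)) with hlst
  refine ⟨fun i => bigAnd (lst i), ?_, ?_⟩
  · intro i j hij
    apply inconsistent_intro
    intro M _ h1 h2
    rw [realize_bigAnd] at h1 h2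
    have e1 : M ⊨ s i j := by
      refine h1 _ ?_
      rw [hlst]
      simp only [List.mem_append, List.mem_map, List.mem_filter, List.mem_finRange,
        true_and, decide_eq_true_eq]
      exact Or.inl ⟨j, Ne.symm hij, rfl⟩
    have e2 : M ⊨ (s i j).not := by
      refine h2 _ ?_
      rw [hlst]
      simp only [List.mem_append, List.mem_map, List.mem_filter, List.mem_finRange,
        true_and, decide_eq_true_eq]
      exact Or.inr ⟨i, hij, rfl⟩
    exact (Sentence.realize_not M).1 e2 e1
  · intro i
    obtain ⟨M, iM, hM⟩ := (T i).exists_model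
    rw [(T i).mem_iff hM, realize_bigAnd]
    intro ψ hψ
    rw [hlst] at hψ
    simp only [List.mem_append, List.mem_map, List.mem_filter, List.mem_finRange,
      true_and, decide_eq_true_eq] at hψ
    rcases hψ with ⟨j, hj, rfl⟩ | ⟨j, hj, rfl⟩
    · exact ((T i).mem_iff hM _).1 (hs i j (Ne.symm hj)).1
    · exact ((T i).mem_iff hM _).1 (hs j i hj).2

lemma rsge2_of_infinite_acc (h : {T : CTheory L | IsAccPoint 𝒯 T}.Infinite) :
    ∃ φ : ℕ → L.Sentence,
      (∀ m n : ℕ, m ≠ n → Inconsistent (φ m) (φ n)) ∧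
      ∀ k : ℕ, (nbhd 𝒯 (φ k)).Infinite := by
  obtain ⟨Ts, hTs⟩ := exists_accPoint h
  have step : ∀ ψ ∈ Ts.1, ∃ σ : L.Sentence,
      (nbhd 𝒯 (ψ ⊓ σ)).Infinite ∧ (ψ ⊓ σ.not) ∈ Ts.1 := by
    intro ψ hψ
    obtain ⟨S, hS, hSne⟩ := ((hTs ψ hψ).diff (Set.finite_singleton Ts)).nonempty
    obtain ⟨σ, h1, h2⟩ := sep S Ts (by simpa using hSne)
    refine ⟨σ, ?_, Ts.inf_mem.2 ⟨hψ, h2⟩⟩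
    have hSA : IsAccPoint 𝒯 S := hS.1
    exact hSA _ (S.inf_mem.2 ⟨hS.2, h1⟩)
  choose σf hσ1 hσ2 using step
  let ψseq : ℕ → {ψ : L.Sentence // ψ ∈ Ts.1} := fun n =>
    Nat.rec ⟨⊤, Ts.top_mem⟩ (fun _ p => ⟨p.1 ⊓ (σf p.1 p.2).not, hσ2 p.1 p.2⟩) n
  set φ : ℕ → L.Sentence := fun n => (ψseq n).1 ⊓ σf (ψseq n).1 (ψseq n).2 with hφ
  have hstep : ∀ n, (ψseq (n + 1)).1 = (ψseq n).1 ⊓ (σf (ψseq n).1 (ψseq n).2).not :=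
    fun n => rfl
  have hchain : ∀ (M : Type (max u v)) [L.Structure M], ∀ n k : ℕ,
      M ⊨ (ψseq (n + k)).1 → M ⊨ (ψseq n).1 := by
    intro M _ n k
    induction k with
    | zero => exact id
    | succ k ih =>
      intro hr
      rw [show n + (k + 1) = (n + k) + 1 from rfl, hstep,
        sentence_realize_inf] at hr
      exact ih hr.1
  have key : ∀ n m : ℕ, n < m → Inconsistent (φ n) (φ m) := by
    intro n m hnm
    apply inconsistent_intro
    intro M _ h1 h2
    rw [hφ, sentence_realize_inf] at h1 h2
    obtain ⟨k, rfl⟩ : ∃ k, m = (n + 1) + k := ⟨m - (n + 1), by omega⟩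
    have hc := hchain M (n + 1) k h2.1
    rw [hstep, sentence_realize_inf] at hc
    exact (Sentence.realize_not M).1 hc.2 h1.2
  refine ⟨φ, ?_, fun k => hσ1 _ _⟩
  intro a b hab
  rcases lt_or_gt_of_ne hab with hlt | hlt
  · exact key a b hlt
  · exact inconsistent_symm (key b a hlt)

end Aux

/-- Proposition 2.5: for any infinite family `𝒯`, `e`-Sp(𝒯) is finite if and
only if `RS(𝒯) = 1`; moreover, if `RS(𝒯) = 1` then `e`-Sp(𝒯) = ds(𝒯). -/
theorem eSp_finite_iff_rank_one (𝒯 : Set (CTheory L)) (hinf : 𝒯.Infinite) :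
    (eSp 𝒯 < Cardinal.aleph0 ↔ RSeq 𝒯 1) ∧
    (RSeq 𝒯 1 → ∀ n : ℕ, dsEq 𝒯 1 n → eSp 𝒯 = n) := by
  have fwd : ∀ {ι : Type} (φ : ι → L.Sentence),
      (∀ i j : ι, i ≠ j → Inconsistent (φ i) (φ j)) →
      (∀ i, (nbhd 𝒯 (φ i)).Infinite) →
      ∃ f : ι → {T : CTheory L // IsAccPoint 𝒯 T}, Function.Injective f := by
    intro ι φ hpi hninf
    choose T hT1 hT2 using fun i => exists_accPoint_nbhd (hninf i)
    refine ⟨fun i => ⟨T i, hT1 i⟩, fun i j hij => ?_⟩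
    by_contra hne
    rw [Subtype.mk.injEq] at hij
    exact not_inconsistent_of_mem (T := T i) (hT2 i)
      (by rw [hij]; exact hT2 j) (hpi i j hne)
  have bwd : ¬ RSge (1 + 1) 𝒯 → ∀ (m : ℕ)
      (f : Fin m → {T : CTheory L // IsAccPoint 𝒯 T}), Function.Injective f →
      ∃ φ : Fin m → L.Sentence,
        (∀ i j : Fin m, i ≠ j → Inconsistent (φ i) (φ j)) ∧
        ∀ i, RSeq (nbhd 𝒯 (φ i)) 1 := by
    intro h2 m f hf
    obtain ⟨φ, hpi, hmem⟩ :=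
      exists_sep_family (fun i => (f i).1) fun i j e => hf (Subtype.ext e)
    refine ⟨φ, hpi, fun i => ⟨(RSge_one_iff _).2 ((f i).2 _ (hmem i)), ?_⟩⟩
    intro hc
    apply h2
    rw [RSge_two_iff] at hc ⊢
    obtain ⟨χ, hχ1, hχ2⟩ := hc
    exact ⟨χ, hχ1, fun k => (hχ2 k).mono (nbhd_mono nbhd_subset _)⟩
  constructor
  · constructor
    · intro hlt
      refine ⟨(RSge_one_iff 𝒯).2 hinf, ?_⟩
      intro h2
      rw [RSge_two_iff] at h2
      obtain ⟨φ, hpi, hk⟩ := h2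
      obtain ⟨f, hfinj⟩ := fwd φ hpi hk
      haveI := Infinite.of_injective f hfinj
      exact absurd hlt (not_lt.2 (Cardinal.aleph0_le_mk _))
    · intro h1
      have hfin : {T : CTheory L | IsAccPoint 𝒯 T}.Finite := by
        by_contra hc
        obtain ⟨φ, hpi, hk⟩ := rsge2_of_infinite_acc hc
        exact h1.2 ((RSge_two_iff 𝒯).2 ⟨φ, hpi, hk⟩)
      rw [show eSp 𝒯 = Cardinal.mk {T : CTheory L // IsAccPoint 𝒯 T} from rfl,
        Cardinal.mk_lt_aleph0_iff]
      exact hfin.to_subtype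
  · intro h1 n hn
    have hub : ∀ (m : ℕ) (f : Fin m → {T : CTheory L // IsAccPoint 𝒯 T}),
        Function.Injective f → m ≤ n := by
      intro m f hf
      obtain ⟨φ, hpi, hre⟩ := bwd h1.2 m f hf
      exact hn.2 ⟨φ, hpi, hre⟩
    obtain ⟨φ, hpi, hre⟩ := hn.1
    obtain ⟨f, hfinj⟩ := fwd φ hpi fun i => (RSge_one_iff _).1 (hre i).1
    haveI hfin : Finite {T : CTheory L // IsAccPoint 𝒯 T} := by
      by_contra hc
      rw [not_finite_iff_infinite] at hc
      have hinj : Function.Injective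
          (fun i : Fin (n + 1) =>
            Infinite.natEmbedding {T : CTheory L // IsAccPoint 𝒯 T} i.1) :=
        fun i j e => Fin.ext ((Infinite.natEmbedding _).injective e)
      have := hub (n + 1) _ hinj
      omega
    haveI := Fintype.ofFinite {T : CTheory L // IsAccPoint 𝒯 T}
    have hcard : Fintype.card {T : CTheory L // IsAccPoint 𝒯 T} = n := by
      refine le_antisymm ?_ ?_
      · by_contra hc
        push_neg at hc
        have hg : Function.Injective
            ((Fintype.equivFin {T : CTheory L // IsAccPoint 𝒯 T}).symm ∘ Fin.castLE hc) :=
          (Fintype.equivFin _).symm.injective.comp (Fin.castLE_injective _)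
        have := hub (n + 1) _ hg
        omega
      · have := Fintype.card_le_of_injective f hfinj
        simpa using this
    rw [show eSp 𝒯 = Cardinal.mk {T : CTheory L // IsAccPoint 𝒯 T} from rfl,
      Cardinal.mk_fintype, hcard]
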